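/- Suppose the nodes ξ_1,…,ξ_n are pairwise distinct and a_{i,l_i−1} ≠ 0 for all i, and set C₁ = ‖U(ξ_1,l_1+1,…,ξ_n,l_n+1)^{−1}‖_∞. Then for every ε > 0 and every vector v ∈ ℂ^R with |v_k| ≤ ε for all k, the component of J_P(x)^{−1} v corresponding to the lowest magnitude a_{i,0} satisfies |[J_P(x)^{−1} v]_{a_{i,0}}| ≤ C₁ ε for every i = 1,…,n. -/

import Mathlib

open scoped BigOperators

noncomputable section

/-- Offset of the `i`-th block of columns: the sum of the multiplicities of all previous blocks. -/
def blockOff {n : ℕ} (L : Fin n → ℕ) (i : Fin n) : ℕ := ∑ i' ∈ Finset.Iio i, L i'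

theorem blockOff_add_lt {n : ℕ} (L : Fin n → ℕ) (i : Fin n) {j : ℕ} (hj : j < L i) :
    blockOff L i + j < ∑ i', L i' := by
  have h1 : ∑ i' ∈ insert i (Finset.Iio i), L i' = ∑ i' ∈ Finset.Iio i, L i' + L i := by
    rw [Finset.sum_insert (by simp)]; ring
  have h2 : ∑ i' ∈ insert i (Finset.Iio i), L i' ≤ ∑ i', L i' :=
    Finset.sum_le_sum_of_subset (Finset.subset_univ _)
  unfold blockOff
  omega

/-- The flattened index of position `j` inside block `i`, when block `i` has size `L i`. -/
def encC {n : ℕ} (L : Fin n → ℕ) (i : Fin n) (j : Fin (L i)) : Fin (∑ i', L i') :=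
  ⟨blockOff L i + j, blockOff_add_lt L i j.isLt⟩

/-- The (square) confluent Vandermonde matrix on nodes `ξ_i` with multiplicities `L i`:
rows are indexed by `k = 0,…,(∑ L i)−1`; the entry in row `k` and column `j` of block `i`
is `(k)_j ξ_i^{k−j}` (zero when `j > k`). -/
def confVand {n : ℕ} (L : Fin n → ℕ) (ξ : Fin n → ℂ) :
    Matrix (Fin (∑ i, L i)) (Fin (∑ i, L i)) ℂ :=
  fun k c => ∑ i, ∑ j : Fin (L i),
    if c = encC L i j then ((k : ℕ).descFactorial j : ℂ) * ξ i ^ ((k : ℕ) - (j : ℕ)) else 0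

/-- The index (in the parameter vector) of the magnitude `a_{i,j}` (`j < l i`) or,
for `j = l i`, of the node `ξ_i`; the parameters are ordered
`(a_{1,0},…,a_{1,l_1−1}, ξ_1, …, a_{n,0},…,a_{n,l_n−1}, ξ_n)`. -/
def encP {n : ℕ} (l : Fin n → ℕ) (i : Fin n) (j : Fin (l i + 1)) :
    Fin (∑ i', (l i' + 1)) :=
  encC (fun i' => l i' + 1) i j

/-- The parameter vector `x = (a_{1,0},…,a_{1,l_1−1}, ξ_1, …, a_{n,0},…,a_{n,l_n−1}, ξ_n)`. -/
def pronyParam {n : ℕ} (l : Fin n → ℕ) (ξ : Fin n → ℂ)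
    (a : (i : Fin n) → Fin (l i) → ℂ) : Fin (∑ i', (l i' + 1)) → ℂ :=
  fun p => ∑ i, ∑ j : Fin (l i + 1),
    if p = encP l i j then (if h : (j : ℕ) < l i then a i ⟨j, h⟩ else ξ i) else 0

/-- The Prony map `P : ℂ^R → ℂ^R` sending the parameter vector
`x = (a_{1,0},…,a_{1,l_1−1}, ξ_1, …, a_{n,0},…,a_{n,l_n−1}, ξ_n)` to the moment vector
`(m_0,…,m_{R−1})`, `m_k = Σ_i Σ_{j<l_i} a_{i,j} (k)_j ξ_i^{k−j}`. -/
def pronyMap {n : ℕ} (l : Fin n → ℕ) (x : Fin (∑ i', (l i' + 1)) → ℂ) :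
    Fin (∑ i', (l i' + 1)) → ℂ :=
  fun k => ∑ i, ∑ j : Fin (l i),
    x (encP l i (Fin.castSucc j)) * ((k : ℕ).descFactorial j : ℂ) *
      (x (encP l i (Fin.last (l i)))) ^ ((k : ℕ) - (j : ℕ))

/-- The Jacobian matrix of the Prony map at `x`: the `(k,p)` entry is the partial
derivative of the `k`-th moment with respect to the `p`-th parameter. -/
def pronyJacobian {n : ℕ} (l : Fin n → ℕ) (x : Fin (∑ i', (l i' + 1)) → ℂ) :
    Matrix (Fin (∑ i', (l i' + 1))) (Fin (∑ i', (l i' + 1))) ℂ :=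
  fun k p => deriv (fun t : ℂ => pronyMap l (Function.update x p t) k) (x p)

theorem blockOff_mono {n : ℕ} (L : Fin n → ℕ) {i i' : Fin n} (h : i < i') :
    blockOff L i + L i ≤ blockOff L i' := by
  have hsub : insert i (Finset.Iio i) ⊆ Finset.Iio i' := by
    intro x hx
    simp only [Finset.mem_insert, Finset.mem_Iio] at hx ⊢
    rcases hx with rfl | hx
    · exact h
    · exact hx.trans h
  have := Finset.sum_le_sum_of_subset (f := L) hsub
  rw [Finset.sum_insert (by simp)] at this
  unfold blockOff
  omega

theorem encC_inj {n : ℕ} {L : Fin n → ℕ} {i i' : Fin n} {j : Fin (L i)} {j' : Fin (L i')}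
    (h : encC L i j = encC L i' j') : i = i' ∧ (j : ℕ) = (j' : ℕ) := by
  have h' : blockOff L i + (j:ℕ) = blockOff L i' + (j':ℕ) := congrArg Fin.val h
  rcases lt_trichotomy i i' with hlt | heq | hgt
  · have := blockOff_mono L hlt; have := j.isLt; omega
  · subst heq; omega
  · have := blockOff_mono L hgt; have := j'.isLt; omega

theorem encC_surj {n : ℕ} (L : Fin n → ℕ) (c : Fin (∑ i', L i')) :
    ∃ i : Fin n, ∃ j : Fin (L i), c = encC L i j := by
  have hinj : Function.Injective (fun p : (Σ i : Fin n, Fin (L i)) => encC L p.1 p.2) := by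
    rintro ⟨i, j⟩ ⟨i', j'⟩ h
    obtain ⟨rfl, h2⟩ := encC_inj h
    simp only [] at h2 ⊢; exact Sigma.ext rfl (heq_of_eq (Fin.ext h2))
  have hbij : Function.Bijective (fun p : (Σ i : Fin n, Fin (L i)) => encC L p.1 p.2) := by
    rw [Fintype.bijective_iff_injective_and_card]
    exact ⟨hinj, by simp⟩
  obtain ⟨⟨i, j⟩, hp⟩ := hbij.2 c
  exact ⟨i, j, hp.symm⟩

theorem sum_encode {n : ℕ} (L : Fin n → ℕ) (f : (i : Fin n) → Fin (L i) → ℂ)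
    (g : Fin (∑ i', L i') → ℂ) :
    ∑ c, (∑ i, ∑ j : Fin (L i), if c = encC L i j then f i j else 0) * g c
      = ∑ i, ∑ j : Fin (L i), f i j * g (encC L i j) := by
  simp only [Finset.sum_mul]
  rw [Finset.sum_comm]
  congr 1; ext i
  rw [Finset.sum_comm]
  congr 1; ext j
  simp [Finset.sum_ite_eq']

theorem eval_enc {n : ℕ} {L : Fin n → ℕ} (f : (i : Fin n) → Fin (L i) → ℂ)
    (i₀ : Fin n) (j₀ : Fin (L i₀)) :
    (∑ i, ∑ j : Fin (L i), if encC L i₀ j₀ = encC L i j then f i j else 0) = f i₀ j₀ := by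
  rw [Finset.sum_eq_single i₀]
  · rw [Finset.sum_eq_single j₀]
    · simp
    · intro j _ hj
      rw [if_neg]; intro h; exact hj (Fin.ext (encC_inj h).2.symm)
    · simp
  · intro i _ hi
    apply Finset.sum_eq_zero
    intro j _
    rw [if_neg]; intro h; exact hi (encC_inj h).1.symm
  · simp

def colMat {n : ℕ} (l : Fin n → ℕ) (w : (i : Fin n) → Fin (l i) → ℂ) :
    Matrix (Fin (∑ i', (l i' + 1))) (Fin (∑ i', (l i' + 1))) ℂ :=
  fun p c => ∑ i, ∑ j : Fin (l i + 1),
    if c = encC (fun i' => l i' + 1) i j then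
      (if (j : ℕ) < l i then (if p = encC (fun i' => l i' + 1) i j then 1 else 0)
       else ∑ j' : Fin (l i), if p = encC (fun i' => l i' + 1) i j'.succ then w i j' else 0)
    else 0

theorem colMat_id {n : ℕ} (l : Fin n → ℕ) (hl : ∀ i, 1 ≤ l i) :
    colMat l (fun i j' => if (j' : ℕ) + 1 = l i then 1 else 0) = 1 := by
  ext p c
  obtain ⟨i₀, j₀, rfl⟩ := encC_surj (fun i' => l i' + 1) c
  rw [colMat]
  rw [eval_enc (L := fun i' => l i' + 1)
    (f := fun i j =>
      (if (j : ℕ) < l i then (if p = encC (fun i' => l i' + 1) i j then 1 else 0)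
       else ∑ j' : Fin (l i), if p = encC (fun i' => l i' + 1) i j'.succ then
         (if (j' : ℕ) + 1 = l i then (1:ℂ) else 0) else 0))]
  by_cases h : (j₀ : ℕ) < l i₀
  · rw [if_pos h]
    by_cases hp : p = encC (fun i' => l i' + 1) i₀ j₀
    · subst hp; simp [Matrix.one_apply]
    · rw [if_neg hp, Matrix.one_apply, if_neg hp]
  · rw [if_neg h]
    have hj₀ : (j₀ : ℕ) = l i₀ := by have := j₀.isLt; omega
    have htop : l i₀ - 1 < l i₀ := by have := hl i₀; omega
    rw [Finset.sum_eq_single ⟨l i₀ - 1, htop⟩]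
    · have hsucc : (⟨l i₀ - 1, htop⟩ : Fin (l i₀)).succ = j₀ := by
        apply Fin.ext; simp; have := hl i₀; omega
      rw [hsucc]
      have h1 : ((⟨l i₀ - 1, htop⟩ : Fin (l i₀)) : ℕ) + 1 = l i₀ := by
        have := hl i₀; simp; omega
      rw [if_pos h1, Matrix.one_apply]
    · intro j' _ hj'
      have : (j' : ℕ) + 1 ≠ l i₀ := by
        intro hcon; apply hj'; apply Fin.ext; simp; omega
      simp [this]
    · simp

example : True := trivial

theorem eval_enc' {n : ℕ} {L : Fin n → ℕ} (f : (i : Fin n) → Fin (L i) → ℂ)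
    (i₀ : Fin n) (j₀ : Fin (L i₀)) :
    (∑ i, ∑ j : Fin (L i), if encC L i j = encC L i₀ j₀ then f i j else 0) = f i₀ j₀ := by
  rw [Finset.sum_eq_single i₀]
  · rw [Finset.sum_eq_single j₀]
    · simp
    · intro j _ hj
      rw [if_neg]; intro h; exact hj (Fin.ext (encC_inj h).2)
    · simp
  · intro i _ hi
    apply Finset.sum_eq_zero
    intro j _
    rw [if_neg]; intro h; exact hi (encC_inj h).1
  · simp

theorem colMat_mul {n : ℕ} (l : Fin n → ℕ) (hl : ∀ i, 1 ≤ l i)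
    (w w' : (i : Fin n) → Fin (l i) → ℂ) :
    colMat l w * colMat l w' = colMat l (fun i j' =>
      (if (j' : ℕ) + 1 < l i then w' i j' else 0)
      + (∑ j'' : Fin (l i), if (j'' : ℕ) + 1 = l i then w' i j'' else 0) * w i j') := by
  set L := fun i' => l i' + 1 with hL
  -- abbreviation for the "row pattern" of colMat
  set F : (p : Fin (∑ i', L i')) → (i : Fin n) → Fin (L i) → ℂ := fun p i j =>
      (if (j : ℕ) < l i then (if p = encC L i j then 1 else 0)
       else ∑ j' : Fin (l i), if p = encC L i j'.succ then w i j' else 0) with hF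
  ext p q
  obtain ⟨i₀, j₀, rfl⟩ := encC_surj L q
  rw [Matrix.mul_apply]
  have hcol : ∀ c, colMat l w p c = ∑ i, ∑ j : Fin (L i), if c = encC L i j then F p i j else 0 := by
    intro c; rfl
  simp only [hcol]
  rw [sum_encode L (F p) (fun c => colMat l w' c (encC L i₀ j₀))]
  have hcol' : ∀ r, colMat l w' r (encC L i₀ j₀) =
      (if (j₀ : ℕ) < l i₀ then (if r = encC L i₀ j₀ then 1 else 0)
       else ∑ j' : Fin (l i₀), if r = encC L i₀ j'.succ then w' i₀ j' else 0) := by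
    intro r
    rw [colMat]
    exact eval_enc (L := L) (fun i j =>
      (if (j : ℕ) < l i then (if r = encC L i j then 1 else 0)
       else ∑ j' : Fin (l i), if r = encC L i j'.succ then w' i j' else 0)) i₀ j₀
  simp only [hcol']
  rw [colMat]
  rw [eval_enc (L := L) (fun i j =>
      (if (j : ℕ) < l i then (if p = encC L i j then 1 else 0)
       else ∑ j' : Fin (l i), if p = encC L i j'.succ then
         ((if (j' : ℕ) + 1 < l i then w' i j' else 0)
          + (∑ j'' : Fin (l i), if (j'' : ℕ) + 1 = l i then w' i j'' else 0) * w i j') else 0)) i₀ j₀]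
  by_cases h : (j₀ : ℕ) < l i₀
  · simp only [if_pos h]
    simp only [mul_ite, mul_one, mul_zero]
    rw [eval_enc' (L := L) (F p) i₀ j₀]
    rw [hF]
    simp only [if_pos h]
  · simp only [if_neg h]
    -- LHS: ∑ i, ∑ j, F p i j * ∑ j', ind(enc i j = enc i₀ j'.succ) * w' i₀ j'
    set T : ℂ := ∑ j'' : Fin (l i₀), if p = encC L i₀ j''.succ then w i₀ j'' else 0 with hT
    set S : ℂ := ∑ j'' : Fin (l i₀), if (j'' : ℕ) + 1 = l i₀ then w' i₀ j'' else 0 with hS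
    have hLHS : (∑ i, ∑ j : Fin (L i), F p i j *
        ∑ j' : Fin (l i₀), if encC L i j = encC L i₀ j'.succ then w' i₀ j' else 0)
        = ∑ j' : Fin (l i₀), F p i₀ j'.succ * w' i₀ j' := by
      have : ∀ i, ∀ j : Fin (L i), F p i j *
          (∑ j' : Fin (l i₀), if encC L i j = encC L i₀ j'.succ then w' i₀ j' else 0)
          = ∑ j' : Fin (l i₀), if encC L i j = encC L i₀ j'.succ then F p i j * w' i₀ j' else 0 := by
        intro i j
        rw [Finset.mul_sum]
        congr 1; ext j'
        simp [mul_ite]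
      simp only [this]
      rw [Finset.sum_congr rfl (fun i _ => Finset.sum_comm), Finset.sum_comm]
      exact Finset.sum_congr rfl (fun j' _ =>
        eval_enc' (L := L) (fun i j => F p i j * w' i₀ j') i₀ j'.succ)
    rw [hLHS]
    -- now both sides are sums over j' : Fin (l i₀)
    have hterm : ∀ j' : Fin (l i₀), F p i₀ j'.succ * w' i₀ j' =
        (if (j' : ℕ) + 1 < l i₀ then (if p = encC L i₀ j'.succ then w' i₀ j' else 0) else 0)
        + (if (j' : ℕ) + 1 = l i₀ then w' i₀ j' else 0) * T := by
      intro j'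
      rw [hF]
      simp only [Fin.val_succ]
      by_cases hj : (j' : ℕ) + 1 < l i₀
      · have h2 : ¬((j' : ℕ) + 1 = l i₀) := by omega
        simp [hj, h2, ite_mul]
      · have hj2 : (j' : ℕ) + 1 = l i₀ := by have := j'.isLt; omega
        simp only [if_neg hj, if_pos hj2]
        rw [← hT]
        ring
    have hterm' : ∀ j' : Fin (l i₀),
        (if p = encC L i₀ j'.succ then
          ((if (j' : ℕ) + 1 < l i₀ then w' i₀ j' else 0) + S * w i₀ j') else 0)
        = (if (j' : ℕ) + 1 < l i₀ then (if p = encC L i₀ j'.succ then w' i₀ j' else 0) else 0)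
        + S * (if p = encC L i₀ j'.succ then w i₀ j' else 0) := by
      intro j'
      by_cases hp : p = encC L i₀ j'.succ <;> simp [hp]
    simp only [hterm, hterm']
    rw [Finset.sum_add_distrib]
    conv_rhs => rw [Finset.sum_add_distrib]
    congr 1
    rw [← Finset.sum_mul, ← hS, ← Finset.mul_sum, ← hT, mul_comm]

example : True := trivial

theorem pronyParam_enc {n : ℕ} (l : Fin n → ℕ) (ξ : Fin n → ℂ)
    (a : (i : Fin n) → Fin (l i) → ℂ) (i₀ : Fin n) (j₀ : Fin (l i₀ + 1)) :
    pronyParam l ξ a (encP l i₀ j₀) = if h : (j₀ : ℕ) < l i₀ then a i₀ ⟨j₀, h⟩ else ξ i₀ := by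
  rw [pronyParam]
  exact eval_enc (L := fun i' => l i' + 1)
    (fun i j => if h : (j : ℕ) < l i then a i ⟨j, h⟩ else ξ i) i₀ j₀

theorem pronyParam_a {n : ℕ} (l : Fin n → ℕ) (ξ : Fin n → ℂ)
    (a : (i : Fin n) → Fin (l i) → ℂ) (i : Fin n) (j : Fin (l i)) :
    pronyParam l ξ a (encP l i (Fin.castSucc j)) = a i j := by
  rw [pronyParam_enc]
  simp

theorem pronyParam_xi {n : ℕ} (l : Fin n → ℕ) (ξ : Fin n → ℂ)
    (a : (i : Fin n) → Fin (l i) → ℂ) (i : Fin n) :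
    pronyParam l ξ a (encP l i (Fin.last (l i))) = ξ i := by
  rw [pronyParam_enc]
  simp

theorem colMat_apply_enc {n : ℕ} (l : Fin n → ℕ) (w : (i : Fin n) → Fin (l i) → ℂ)
    (r : Fin (∑ i', (l i' + 1))) (i₀ : Fin n) (j₀ : Fin (l i₀ + 1)) :
    colMat l w r (encC (fun i' => l i' + 1) i₀ j₀) =
      (if (j₀ : ℕ) < l i₀ then (if r = encC (fun i' => l i' + 1) i₀ j₀ then 1 else 0)
       else ∑ j' : Fin (l i₀),
         if r = encC (fun i' => l i' + 1) i₀ j'.succ then w i₀ j' else 0) := by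
  rw [colMat]
  exact eval_enc (L := fun i' => l i' + 1) (fun i j =>
      (if (j : ℕ) < l i then (if r = encC (fun i' => l i' + 1) i j then 1 else 0)
       else ∑ j' : Fin (l i), if r = encC (fun i' => l i' + 1) i j'.succ then w i j' else 0))
    i₀ j₀

theorem confVand_mul_colMat_apply {n : ℕ} (l : Fin n → ℕ) (ξ : Fin n → ℂ)
    (w : (i : Fin n) → Fin (l i) → ℂ) (k : Fin (∑ i', (l i' + 1))) (i₀ : Fin n)
    (j₀ : Fin (l i₀ + 1)) :
    (confVand (fun i => l i + 1) ξ * colMat l w) k (encC (fun i' => l i' + 1) i₀ j₀) =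
      if (j₀ : ℕ) < l i₀ then ((k : ℕ).descFactorial j₀ : ℂ) * ξ i₀ ^ ((k : ℕ) - (j₀ : ℕ))
      else ∑ j' : Fin (l i₀),
        ((k : ℕ).descFactorial ((j' : ℕ) + 1) : ℂ) * ξ i₀ ^ ((k : ℕ) - ((j' : ℕ) + 1)) * w i₀ j' := by
  rw [Matrix.mul_apply]
  have hrow : ∀ c, confVand (fun i' => l i' + 1) ξ k c
      = ∑ i, ∑ j : Fin ((fun i' => l i' + 1) i), if c = encC (fun i' => l i' + 1) i j then
          ((k : ℕ).descFactorial j : ℂ) * ξ i ^ ((k : ℕ) - (j : ℕ)) else 0 := fun c => rfl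
  simp only [hrow]
  rw [sum_encode (fun i' => l i' + 1) (fun i j => ((k : ℕ).descFactorial j : ℂ) * ξ i ^ ((k : ℕ) - (j : ℕ)))
    (fun c => colMat l w c (encC (fun i' => l i' + 1) i₀ j₀))]
  simp only [colMat_apply_enc l w _ i₀ j₀]
  by_cases h : (j₀ : ℕ) < l i₀
  · simp only [if_pos h]
    simp only [mul_ite, mul_one, mul_zero]
    exact eval_enc' (L := fun i' => l i' + 1)
      (fun i j => ((k : ℕ).descFactorial j : ℂ) * ξ i ^ ((k : ℕ) - (j : ℕ))) i₀ j₀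
  · simp only [if_neg h]
    have hmul : ∀ i, ∀ j : Fin ((fun i' => l i' + 1) i),
        (((k : ℕ).descFactorial j : ℂ) * ξ i ^ ((k : ℕ) - (j : ℕ))) *
          (∑ j' : Fin (l i₀), if encC (fun i' => l i' + 1) i j = encC (fun i' => l i' + 1) i₀ j'.succ then w i₀ j' else 0)
        = ∑ j' : Fin (l i₀), if encC (fun i' => l i' + 1) i j = encC (fun i' => l i' + 1) i₀ j'.succ then
            (((k : ℕ).descFactorial j : ℂ) * ξ i ^ ((k : ℕ) - (j : ℕ))) * w i₀ j' else 0 := by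
      intro i j
      rw [Finset.mul_sum]
      congr 1; ext j'
      simp [mul_ite]
    simp only [hmul]
    rw [Finset.sum_congr rfl (fun i _ => Finset.sum_comm), Finset.sum_comm]
    refine Finset.sum_congr rfl (fun j' _ => ?_)
    rw [eval_enc' (L := fun i' => l i' + 1) (fun i j =>
      (((k : ℕ).descFactorial j : ℂ) * ξ i ^ ((k : ℕ) - (j : ℕ))) * w i₀ j') i₀ j'.succ]
    rfl

theorem encP_inj {n : ℕ} {l : Fin n → ℕ} {i i' : Fin n} {j : Fin (l i + 1)} {j' : Fin (l i' + 1)}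
    (h : encP l i j = encP l i' j') : i = i' ∧ (j : ℕ) = (j' : ℕ) :=
  encC_inj (L := fun i' => l i' + 1) h

theorem pronyJacobian_eq {n : ℕ} (l : Fin n → ℕ) (ξ : Fin n → ℂ)
    (a : (i : Fin n) → Fin (l i) → ℂ) :
    pronyJacobian l (pronyParam l ξ a) = confVand (fun i => l i + 1) ξ * colMat l a := by
  ext k p
  obtain ⟨i₀, j₀, rfl⟩ := encC_surj (fun i' => l i' + 1) p
  rw [confVand_mul_colMat_apply]
  simp only [pronyJacobian]
  by_cases h : (j₀ : ℕ) < l i₀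
  · -- derivative w.r.t. a magnitude parameter
    rw [if_pos h]
    set x := pronyParam l ξ a with hx
    have hd : HasDerivAt
        (fun t => pronyMap l (Function.update x (encC (fun i' => l i' + 1) i₀ j₀) t) k)
        (∑ i, ∑ j : Fin (l i),
          if encP l i (Fin.castSucc j) = encC (fun i' => l i' + 1) i₀ j₀ then
            ((k : ℕ).descFactorial j : ℂ) *
              (x (encP l i (Fin.last (l i)))) ^ ((k : ℕ) - (j : ℕ)) else 0)
        (x (encC (fun i' => l i' + 1) i₀ j₀)) := by
      simp only [pronyMap]
      apply HasDerivAt.fun_sum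
      intro i _
      apply HasDerivAt.fun_sum
      intro j _
      have h2 : ¬(encP l i (Fin.last (l i)) = encC (fun i' => l i' + 1) i₀ j₀) := by
        intro hcon
        obtain ⟨rfl, hval⟩ := encP_inj (l := l) hcon
        simp at hval
        omega
      by_cases h1 : encP l i (Fin.castSucc j) = encC (fun i' => l i' + 1) i₀ j₀
      · rw [if_pos h1]
        have hfun : (fun t => Function.update x (encC (fun i' => l i' + 1) i₀ j₀) t
              (encP l i (Fin.castSucc j)) * ((k : ℕ).descFactorial j : ℂ) *
              (Function.update x (encC (fun i' => l i' + 1) i₀ j₀) t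
                (encP l i (Fin.last (l i)))) ^ ((k : ℕ) - (j : ℕ)))
            = fun t => t * ((k : ℕ).descFactorial j : ℂ) *
                (x (encP l i (Fin.last (l i)))) ^ ((k : ℕ) - (j : ℕ)) := by
          funext t
          rw [Function.update_apply, Function.update_apply, if_pos h1, if_neg h2]
        rw [hfun]
        have := ((hasDerivAt_id (x (encC (fun i' => l i' + 1) i₀ j₀))).mul_const
          (((k : ℕ).descFactorial j : ℂ))).mul_const
          ((x (encP l i (Fin.last (l i)))) ^ ((k : ℕ) - (j : ℕ)))
        simpa using this
      · rw [if_neg h1]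
        have hfun : (fun t => Function.update x (encC (fun i' => l i' + 1) i₀ j₀) t
              (encP l i (Fin.castSucc j)) * ((k : ℕ).descFactorial j : ℂ) *
              (Function.update x (encC (fun i' => l i' + 1) i₀ j₀) t
                (encP l i (Fin.last (l i)))) ^ ((k : ℕ) - (j : ℕ)))
            = fun _ => x (encP l i (Fin.castSucc j)) * ((k : ℕ).descFactorial j : ℂ) *
                (x (encP l i (Fin.last (l i)))) ^ ((k : ℕ) - (j : ℕ)) := by
          funext t
          rw [Function.update_apply, Function.update_apply, if_neg h1, if_neg h2]
        rw [hfun]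
        exact hasDerivAt_const _ _
    rw [hd.deriv]
    rw [Finset.sum_eq_single i₀]
    · rw [Finset.sum_eq_single (⟨(j₀ : ℕ), h⟩ : Fin (l i₀))]
      · have hcs : encP l i₀ (Fin.castSucc ⟨(j₀ : ℕ), h⟩) = encC (fun i' => l i' + 1) i₀ j₀ := by
          apply Fin.ext
          simp [encP, encC]
        rw [if_pos hcs, hx, pronyParam_xi]
      · intro j _ hj
        rw [if_neg]
        intro hcon
        obtain ⟨-, hval⟩ := encP_inj (l := l) hcon
        apply hj
        apply Fin.ext
        simpa using hval
      · simp
    · intro i _ hi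
      apply Finset.sum_eq_zero
      intro j _
      rw [if_neg]
      intro hcon
      exact hi (encP_inj (l := l) hcon).1
    · simp
  · -- derivative w.r.t. a node parameter
    rw [if_neg h]
    have hj₀ : j₀ = Fin.last (l i₀) := by
      apply Fin.ext
      have := j₀.isLt
      simp only [Fin.val_last]
      omega
    subst hj₀
    set x := pronyParam l ξ a with hx
    have hd : HasDerivAt
        (fun t => pronyMap l (Function.update x
          (encC (fun i' => l i' + 1) i₀ (Fin.last (l i₀))) t) k)
        (∑ i, ∑ j : Fin (l i),
          if encP l i (Fin.last (l i)) = encC (fun i' => l i' + 1) i₀ (Fin.last (l i₀)) then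
            x (encP l i (Fin.castSucc j)) * ((k : ℕ).descFactorial j : ℂ) *
              ((((k : ℕ) - (j : ℕ) : ℕ) : ℂ) *
                (x (encC (fun i' => l i' + 1) i₀ (Fin.last (l i₀)))) ^ ((k : ℕ) - (j : ℕ) - 1))
          else 0)
        (x (encC (fun i' => l i' + 1) i₀ (Fin.last (l i₀)))) := by
      simp only [pronyMap]
      apply HasDerivAt.fun_sum
      intro i _
      apply HasDerivAt.fun_sum
      intro j _
      have h1 : ¬(encP l i (Fin.castSucc j) = encC (fun i' => l i' + 1) i₀ (Fin.last (l i₀))) := by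
        intro hcon
        obtain ⟨rfl, hval⟩ := encP_inj (l := l) hcon
        simp at hval
        omega
      by_cases h2 : encP l i (Fin.last (l i)) = encC (fun i' => l i' + 1) i₀ (Fin.last (l i₀))
      · rw [if_pos h2]
        have hfun : (fun t => Function.update x
              (encC (fun i' => l i' + 1) i₀ (Fin.last (l i₀))) t
              (encP l i (Fin.castSucc j)) * ((k : ℕ).descFactorial j : ℂ) *
              (Function.update x (encC (fun i' => l i' + 1) i₀ (Fin.last (l i₀))) t
                (encP l i (Fin.last (l i)))) ^ ((k : ℕ) - (j : ℕ)))
            = fun t => x (encP l i (Fin.castSucc j)) * ((k : ℕ).descFactorial j : ℂ) *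
                t ^ ((k : ℕ) - (j : ℕ)) := by
          funext t
          rw [Function.update_apply, Function.update_apply, if_pos h2, if_neg h1]
        rw [hfun]
        exact (hasDerivAt_pow ((k : ℕ) - (j : ℕ))
          (x (encC (fun i' => l i' + 1) i₀ (Fin.last (l i₀))))).const_mul
          (x (encP l i (Fin.castSucc j)) * ((k : ℕ).descFactorial j : ℂ))
      · rw [if_neg h2]
        have hfun : (fun t => Function.update x
              (encC (fun i' => l i' + 1) i₀ (Fin.last (l i₀))) t
              (encP l i (Fin.castSucc j)) * ((k : ℕ).descFactorial j : ℂ) *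
              (Function.update x (encC (fun i' => l i' + 1) i₀ (Fin.last (l i₀))) t
                (encP l i (Fin.last (l i)))) ^ ((k : ℕ) - (j : ℕ)))
            = fun _ => x (encP l i (Fin.castSucc j)) * ((k : ℕ).descFactorial j : ℂ) *
                (x (encP l i (Fin.last (l i)))) ^ ((k : ℕ) - (j : ℕ)) := by
          funext t
          rw [Function.update_apply, Function.update_apply, if_neg h1, if_neg h2]
        rw [hfun]
        exact hasDerivAt_const _ _
    rw [hd.deriv]
    rw [Finset.sum_eq_single i₀]
    · have hcond : encP l i₀ (Fin.last (l i₀)) = encC (fun i' => l i' + 1) i₀ (Fin.last (l i₀)) :=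
        rfl
      simp only [if_pos hcond]
      refine Finset.sum_congr rfl (fun j _ => ?_)
      have hxx : pronyParam l ξ a (encC (fun i' => l i' + 1) i₀ (Fin.last (l i₀))) = ξ i₀ :=
        pronyParam_xi l ξ a i₀
      rw [hx, hxx, pronyParam_a]
      rw [Nat.descFactorial_succ]
      have hexp : (k : ℕ) - ((j : ℕ) + 1) = (k : ℕ) - (j : ℕ) - 1 := by omega
      rw [hexp]
      push_cast
      ring
    · intro i _ hi
      apply Finset.sum_eq_zero
      intro j _
      rw [if_neg]
      intro hcon
      exact hi (encP_inj (l := l) hcon).1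
    · simp

theorem colMat_mulVec_row0 {n : ℕ} (l : Fin n → ℕ) (hl : ∀ i, 1 ≤ l i)
    (w : (i : Fin n) → Fin (l i) → ℂ) (u : Fin (∑ i', (l i' + 1)) → ℂ)
    (i : Fin n) (h0 : (0 : ℕ) < l i + 1) :
    Matrix.mulVec (colMat l w) u (encP l i ⟨0, h0⟩) = u (encP l i ⟨0, h0⟩) := by
  rw [Matrix.mulVec, dotProduct]
  have hrow : ∀ c, colMat l w (encP l i ⟨0, h0⟩) c
      = ∑ i', ∑ j : Fin (l i' + 1), if c = encC (fun i'' => l i'' + 1) i' j then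
          (if (j : ℕ) < l i' then
            (if encP l i ⟨0, h0⟩ = encC (fun i'' => l i'' + 1) i' j then 1 else 0)
           else ∑ j' : Fin (l i'), if encP l i ⟨0, h0⟩ = encC (fun i'' => l i'' + 1) i' j'.succ
             then w i' j' else 0) else 0 := fun c => rfl
  simp only [hrow]
  rw [sum_encode (fun i'' => l i'' + 1) (fun i' j =>
      (if (j : ℕ) < l i' then
        (if encP l i ⟨0, h0⟩ = encC (fun i'' => l i'' + 1) i' j then 1 else 0)
       else ∑ j' : Fin (l i'), if encP l i ⟨0, h0⟩ = encC (fun i'' => l i'' + 1) i' j'.succ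
         then w i' j' else 0)) u]
  rw [Finset.sum_eq_single i]
  · rw [Finset.sum_eq_single (⟨0, h0⟩ : Fin (l i + 1))]
    · have hp : encP l i ⟨0, h0⟩ = encC (fun i'' => l i'' + 1) i ⟨0, h0⟩ := rfl
      rw [if_pos (by simpa using Nat.lt_of_succ_le (hl i)), if_pos hp, one_mul]
      rfl
    · intro j _ hj
      by_cases hlt : (j : ℕ) < l i
      · rw [if_pos hlt, if_neg, zero_mul]
        intro hcon
        exact hj (Fin.ext (encP_inj (l := l) hcon).2.symm)
      · rw [if_neg hlt]
        rw [Finset.sum_eq_zero, zero_mul]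
        intro j' _
        rw [if_neg]
        intro hcon
        have := (encP_inj (l := l) hcon).2
        simp at this
    · simp
  · intro i' _ hi'
    apply Finset.sum_eq_zero
    intro j _
    by_cases hlt : (j : ℕ) < l i'
    · rw [if_pos hlt, if_neg, zero_mul]
      intro hcon
      exact hi' (encP_inj (l := l) hcon).1.symm
    · rw [if_neg hlt]
      rw [Finset.sum_eq_zero, zero_mul]
      intro j' _
      rw [if_neg]
      intro hcon
      exact hi' (encP_inj (l := l) hcon).1.symm
  · simp

theorem colMat_right_inv {n : ℕ} (l : Fin n → ℕ) (hl : ∀ i, 1 ≤ l i)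
    (htop : ∀ i, l i - 1 < l i)
    (a : (i : Fin n) → Fin (l i) → ℂ)
    (hhigh : ∀ i, a i ⟨l i - 1, htop i⟩ ≠ 0) :
    colMat l a * colMat l (fun i j' =>
      if (j' : ℕ) + 1 = l i then (a i ⟨l i - 1, htop i⟩)⁻¹
      else -(a i j') * (a i ⟨l i - 1, htop i⟩)⁻¹) = 1 := by
  rw [colMat_mul l hl]
  refine Eq.trans (congrArg (colMat l) ?_) (colMat_id l hl)
  funext i j'
  have htop : l i - 1 < l i := by have := hl i; omega
  have hS : (∑ j'' : Fin (l i), if (j'' : ℕ) + 1 = l i then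
      (if (j'' : ℕ) + 1 = l i then (a i ⟨l i - 1, htop⟩)⁻¹
       else -(a i j'') * (a i ⟨l i - 1, htop⟩)⁻¹) else 0)
      = (a i ⟨l i - 1, htop⟩)⁻¹ := by
    rw [Finset.sum_eq_single ⟨l i - 1, htop⟩]
    · have h1 : (l i - 1) + 1 = l i := by have := hl i; omega
      simp only [h1]
      simp
    · intro j _ hj
      have : (j : ℕ) + 1 ≠ l i := by
        intro hcon; apply hj; apply Fin.ext; simp; omega
      simp [this]
    · simp
  rw [hS]
  by_cases hj : (j' : ℕ) + 1 < l i
  · have h2 : ¬((j' : ℕ) + 1 = l i) := by omega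
    simp only [if_pos hj, if_neg h2]
    ring
  · have h2 : (j' : ℕ) + 1 = l i := by have := j'.isLt; omega
    simp only [if_neg hj, if_pos h2]
    have hj' : j' = ⟨l i - 1, htop⟩ := by apply Fin.ext; simp; omega
    rw [hj']
    rw [inv_mul_cancel₀ (hhigh i)]
    ring

/-- let `C₁ = ‖U(ξ_1,l_1+1,…,ξ_n,l_n+1)⁻¹‖_∞` (maximal row sum of absolute
values).  If the nodes are pairwise distinct and the highest magnitudes are nonzero, then
for every `ε > 0` and every `v` with `|v_k| ≤ ε`, the component of `J_P(x)⁻¹ v`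
corresponding to the lowest magnitude `a_{i,0}` has absolute value at most `C₁ ε`. -/
theorem pronyJacobian_inv_lowest_magnitude_component_bound
    (n : ℕ) (hn : 1 ≤ n) (l : Fin n → ℕ) (hl : ∀ i, 1 ≤ l i)
    (ξ : Fin n → ℂ) (a : (i : Fin n) → Fin (l i) → ℂ)
    (hdist : ∀ i j : Fin n, i ≠ j → ξ i ≠ ξ j)
    (hhigh : ∀ i, a i ⟨l i - 1, by have := hl i; omega⟩ ≠ 0)
    (C₁ : ℝ)
    (hC₁ : C₁ = ⨆ r, ∑ c, ‖((confVand (fun i => l i + 1) ξ)⁻¹) r c‖)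
    (ε : ℝ) (hε : 0 < ε) (v : Fin (∑ i', (l i' + 1)) → ℂ)
    (hv : ∀ k, ‖v k‖ ≤ ε) :
    ∀ i : Fin n,
      ‖Matrix.mulVec (pronyJacobian l (pronyParam l ξ a))⁻¹ v
            (encP l i ⟨0, by omega⟩)‖ ≤ C₁ * ε := by
  intro i
  have hBinv : (colMat l a)⁻¹ = colMat l (fun i' j' =>
      if (j' : ℕ) + 1 = l i' then (a i' ⟨l i' - 1, by have := hl i'; omega⟩)⁻¹
      else -(a i' j') * (a i' ⟨l i' - 1, by have := hl i'; omega⟩)⁻¹) :=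
    Matrix.inv_eq_right_inv (colMat_right_inv l hl (fun i => Nat.sub_lt (hl i) Nat.one_pos) a hhigh)
  have hJ : (pronyJacobian l (pronyParam l ξ a))⁻¹
      = colMat l (fun i' j' =>
          if (j' : ℕ) + 1 = l i' then (a i' ⟨l i' - 1, by have := hl i'; omega⟩)⁻¹
          else -(a i' j') * (a i' ⟨l i' - 1, by have := hl i'; omega⟩)⁻¹)
        * (confVand (fun i => l i + 1) ξ)⁻¹ := by
    rw [pronyJacobian_eq, Matrix.mul_inv_rev, hBinv]
  rw [hJ, ← Matrix.mulVec_mulVec]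
  rw [colMat_mulVec_row0 l hl _ _ i]
  rw [Matrix.mulVec, dotProduct]
  calc ‖∑ c, (confVand (fun i => l i + 1) ξ)⁻¹ (encP l i ⟨0, by omega⟩) c * v c‖
      ≤ ∑ c, ‖(confVand (fun i => l i + 1) ξ)⁻¹ (encP l i ⟨0, by omega⟩) c * v c‖ :=
        norm_sum_le _ _
    _ = ∑ c, ‖(confVand (fun i => l i + 1) ξ)⁻¹ (encP l i ⟨0, by omega⟩) c‖
          * ‖v c‖ := by simp [norm_mul]
    _ ≤ ∑ c, ‖(confVand (fun i => l i + 1) ξ)⁻¹ (encP l i ⟨0, by omega⟩) c‖ * ε :=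
        Finset.sum_le_sum (fun c _ =>
          mul_le_mul_of_nonneg_left (hv c) (norm_nonneg _))
    _ = (∑ c, ‖(confVand (fun i => l i + 1) ξ)⁻¹ (encP l i ⟨0, by omega⟩) c‖) * ε := by
        rw [Finset.sum_mul]
    _ ≤ C₁ * ε := by
        refine mul_le_mul_of_nonneg_right ?_ hε.le
        rw [hC₁]
        exact le_ciSup (f := fun r => ∑ c,
            ‖((confVand (fun i => l i + 1) ξ)⁻¹) r c‖)
          (Set.Finite.bddAbove (Set.finite_range _)) (encP l i ⟨0, by omega⟩)
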